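/- arXiv:1605.07911 — 4 statements merged into one kernel-verified Lean document; each statement's English description precedes it below -/
import Mathlib

section
/- Let (G,p) be a framework in ℝ^d whose edge directions lie on a conic at infinity defined by a nonzero symmetric matrix Q, i.e., (p_j - p_i)ᵀQ(p_j - p_i) = 0 for every edge {i,j}. Let m(x) = x + (xᵀQx)v be an associated perturbation map for some nonzero v ∈ ℝ^d. Then for each vertex i there exists an affine map A_i of ℝ^d such that A_i(p_j) = m(p_j) for every vertex j in the closed neighborhood of i (i.e., j = i or j adjacent to i). -/
open Matrix

lemma vecMulVec_mulVec' {d : ℕ} (v w x : Fin d → ℝ) :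
    (vecMulVec v w).mulVec x = (w ⬝ᵥ x) • v := by
  ext i
  simp only [vecMulVec, mulVec, dotProduct, Pi.smul_apply, smul_eq_mul, of_apply]
  rw [Finset.sum_mul]
  exact Finset.sum_congr rfl fun _ _ => by ring

/-- If the edge directions of a framework `(G, p)` lie on a conic at infinity defined by
a nonzero symmetric matrix `Q`, and `m(x) = x + (xᵀQx)·v` is an associated perturbation
map, then for each vertex `i` there is an affine map agreeing with `m` on the closed
neighborhood of `i`. -/
theorem neighborhood_affine_preequivalent {d n : ℕ} (G : SimpleGraph (Fin n))
    (p : Fin n → Fin d → ℝ)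
    (Q : Matrix (Fin d) (Fin d) ℝ) (hQsymm : Q.IsSymm) (hQne : Q ≠ 0)
    (hconic : ∀ i j : Fin n, G.Adj i j →
      (p j - p i) ⬝ᵥ Q.mulVec (p j - p i) = 0)
    (v : Fin d → ℝ) (hv : v ≠ 0) :
    ∀ i : Fin n, ∃ (A : Matrix (Fin d) (Fin d) ℝ) (t : Fin d → ℝ),
      ∀ j : Fin n, (j = i ∨ G.Adj i j) →
        A.mulVec (p j) + t = p j + (p j ⬝ᵥ Q.mulVec (p j)) • v := by
  intro i
  refine ⟨1 + (2 : ℝ) • vecMulVec v (Q.vecMul (p i)),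
    (-(p i ⬝ᵥ Q.mulVec (p i))) • v, ?_⟩
  intro j hj
  have key : p j ⬝ᵥ Q.mulVec (p j)
      = 2 * (p i ⬝ᵥ Q.mulVec (p j)) - p i ⬝ᵥ Q.mulVec (p i) := by
    rcases hj with rfl | hadj
    · ring
    · have h := hconic i j hadj
      have hsym : p j ⬝ᵥ Q.mulVec (p i) = p i ⬝ᵥ Q.mulVec (p j) := by
        rw [dotProduct_mulVec, ← mulVec_transpose, hQsymm.eq, dotProduct_comm]
      rw [sub_dotProduct, mulVec_sub, dotProduct_sub, dotProduct_sub, hsym] at h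
      linarith
  have hvm : Q.vecMul (p i) ⬝ᵥ p j = p i ⬝ᵥ Q.mulVec (p j) := by
    rw [dotProduct_mulVec]
  rw [add_mulVec, one_mulVec, smul_mulVec, vecMulVec_mulVec', hvm, key]
  module
end

section
/- A nontrivial inhomogeneous quadric in ℝ^d whose zero set has full d-dimensional affine span cannot have d cone points in general affine position (i.e., d cone points whose affine span is (d-1)-dimensional, together with the full-span hypothesis forcing a contradiction). Equivalently, the set of cone points of such a quadric is an affine subspace of dimension at most d-2. -/
open Matrix

/-- A nontrivial inhomogeneous quadric in ℝ^d whose zero set has full d-dimensional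
affine span cannot have `d` cone points in general affine position (i.e. `d` affinely
independent cone points). -/
theorem no_d_cone_points_in_general_position {d : ℕ}
    (Q : Matrix (Fin d) (Fin d) ℝ) (hQsymm : Q.IsSymm) (l : Fin d → ℝ) (c : ℝ)
    (hnontriv : ¬ (Q = 0 ∧ l = 0 ∧ c = 0))
    (hspan : affineSpan ℝ {x : Fin d → ℝ | x ⬝ᵥ Q.mulVec x + l ⬝ᵥ x + c = 0} = ⊤)
    (x : Fin d → Fin d → ℝ)
    (hindep : AffineIndependent ℝ x)
    (hcone : ∀ k : Fin d,
      (x k ⬝ᵥ Q.mulVec (x k) + l ⬝ᵥ (x k) + c = 0) ∧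
      ∀ y : Fin d → ℝ, y ⬝ᵥ Q.mulVec y + l ⬝ᵥ y + c = 0 →
        ∀ t : ℝ, (x k + t • (y - x k)) ⬝ᵥ Q.mulVec (x k + t • (y - x k)) +
          l ⬝ᵥ (x k + t • (y - x k)) + c = 0) :
    False := by
  classical
  set S : Set (Fin d → ℝ) := {x : Fin d → ℝ | x ⬝ᵥ Q.mulVec x + l ⬝ᵥ x + c = 0} with hS
  -- case d = 0
  rcases Nat.eq_zero_or_pos d with hd | hd
  · subst hd
    have hQ : Q = 0 := Subsingleton.elim _ _
    have hl : l = 0 := Subsingleton.elim _ _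
    have hc : c ≠ 0 := fun h => hnontriv ⟨hQ, hl, h⟩
    have hSe : S = ∅ := by
      ext y
      simp [hS, dotProduct, hc]
    rw [hSe, AffineSubspace.span_empty] at hspan
    have h0 : (0 : Fin 0 → ℝ) ∈ (⊥ : AffineSubspace ℝ (Fin 0 → ℝ)) := by
      rw [hspan]; exact AffineSubspace.mem_top ℝ (Fin 0 → ℝ) _
    exact AffineSubspace.notMem_bot ℝ (Fin 0 → ℝ) _ h0
  -- symmetry of the bilinear form
  have hsym : ∀ a b : Fin d → ℝ, a ⬝ᵥ Q.mulVec b = b ⬝ᵥ Q.mulVec a := by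
    intro a b
    rw [Matrix.dotProduct_mulVec, ← Matrix.mulVec_transpose, hQsymm.eq, dotProduct_comm]
  -- generic expansion
  have expand : ∀ (z v : Fin d → ℝ) (t : ℝ),
      (z + t • v) ⬝ᵥ Q.mulVec (z + t • v) + l ⬝ᵥ (z + t • v) + c =
      (z ⬝ᵥ Q.mulVec z + l ⬝ᵥ z + c) +
      t * (z ⬝ᵥ Q.mulVec v + v ⬝ᵥ Q.mulVec z + l ⬝ᵥ v) +
      t ^ 2 * (v ⬝ᵥ Q.mulVec v) := by
    intro z v t
    simp only [Matrix.mulVec_add, Matrix.mulVec_smul, add_dotProduct,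
      dotProduct_add, smul_dotProduct, dotProduct_smul, smul_eq_mul]
    ring
  -- Step B: the gradient vanishes at each cone point
  have hgrad : ∀ k : Fin d, ∀ i, 2 * Q.mulVec (x k) i + l i = 0 := by
    intro k
    set w : Fin d → ℝ := fun i => 2 * Q.mulVec (x k) i + l i with hw
    have hwdot : ∀ v : Fin d → ℝ,
        w ⬝ᵥ v = x k ⬝ᵥ Q.mulVec v + v ⬝ᵥ Q.mulVec (x k) + l ⬝ᵥ v := by
      intro v
      have : x k ⬝ᵥ Q.mulVec v = Q.mulVec (x k) ⬝ᵥ v := by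
        rw [hsym, dotProduct_comm]
      rw [this, dotProduct_comm v (Q.mulVec (x k))]
      simp only [hw, dotProduct, Finset.sum_add_distrib, add_mul, two_mul]
      try ring_nf
    have hB : ∀ y ∈ S, w ⬝ᵥ (y - x k) = 0 := by
      intro y hy
      have h1 := (hcone k).2 y hy 1
      have h2 := (hcone k).2 y hy (-1)
      rw [expand] at h1 h2
      rw [(hcone k).1] at h1 h2
      rw [hwdot]
      nlinarith [h1, h2]
    -- the level set is an affine subspace
    have hT : ∀ y : Fin d → ℝ, w ⬝ᵥ y = w ⬝ᵥ x k := by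
      set T : AffineSubspace ℝ (Fin d → ℝ) :=
        { carrier := {y | w ⬝ᵥ y = w ⬝ᵥ x k}
          smul_vsub_vadd_mem' := by
            intro t p1 p2 p3 h1 h2 h3
            simp only [Set.mem_setOf_eq, vsub_eq_sub, vadd_eq_add] at *
            simp only [dotProduct_add, dotProduct_smul, dotProduct_sub,
              smul_eq_mul, h1, h2, h3]
            ring } with hTdef
      have hsub : S ⊆ (T : Set (Fin d → ℝ)) := by
        intro y hy
        have := hB y hy
        have : w ⬝ᵥ y - w ⬝ᵥ x k = 0 := by
          rw [← dotProduct_sub]; exact this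
        exact sub_eq_zero.mp this
      have : affineSpan ℝ S ≤ T := affineSpan_le.mpr hsub
      rw [hspan] at this
      intro y
      exact this (AffineSubspace.mem_top ℝ (Fin d → ℝ) y)
    intro i
    have := hT (x k + Pi.single i 1)
    rw [dotProduct_add, dotProduct_single] at this
    have : w i = 0 := by linarith
    simpa [hw] using this
  have hQx : ∀ k : Fin d, Q.mulVec (x k) = (-(1:ℝ)/2) • l := by
    intro k
    funext i
    have := hgrad k i
    simp only [Pi.smul_apply, smul_eq_mul]
    linarith
  have hlx : ∀ k : Fin d, l ⬝ᵥ x k = -2 * c := by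
    intro k
    have h0 := (hcone k).1
    rw [hQx k] at h0
    rw [dotProduct_smul, smul_eq_mul, dotProduct_comm (x k) l] at h0
    linarith
  -- the vector span of the cone points
  set V : Submodule ℝ (Fin d → ℝ) := vectorSpan ℝ (Set.range x) with hV
  have hQV : ∀ v ∈ V, Q.mulVec v = 0 ∧ l ⬝ᵥ v = 0 := by
    intro v hv
    rw [hV, vectorSpan_def] at hv
    induction hv using Submodule.span_induction with
    | mem a ha =>
      obtain ⟨p, ⟨i, rfl⟩, q, ⟨j, rfl⟩, rfl⟩ := ha
      constructor
      · show Q.mulVec (x i - x j) = 0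
        rw [Matrix.mulVec_sub, hQx i, hQx j, sub_self]
      · show l ⬝ᵥ (x i - x j) = 0
        rw [dotProduct_sub, hlx i, hlx j, sub_self]
    | zero => simp
    | add a b _ _ ha hb =>
      exact ⟨by rw [Matrix.mulVec_add, ha.1, hb.1, add_zero],
        by rw [dotProduct_add, ha.2, hb.2, add_zero]⟩
    | smul t a _ ha =>
      exact ⟨by rw [Matrix.mulVec_smul, ha.1, smul_zero],
        by rw [dotProduct_smul, ha.2, smul_zero]⟩
  -- V is a proper subspace
  have hrankV : Module.finrank ℝ V = d - 1 := by
    apply hindep.finrank_vectorSpan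
    simp [Fintype.card_fin]
    omega
  have hVne : V ≠ ⊤ := by
    intro h
    rw [h] at hrankV
    rw [finrank_top, Module.finrank_fin_fun] at hrankV
    omega
  obtain ⟨u, hu⟩ : ∃ u, u ∉ V := by
    by_contra h
    push_neg at h
    exact hVne (Submodule.eq_top_iff'.mpr h)
  have htop : V ⊔ Submodule.span ℝ {u} = ⊤ := by
    apply Submodule.eq_top_of_finrank_eq
    rw [Module.finrank_fin_fun]
    have hlt : V < V ⊔ Submodule.span ℝ {u} := by
      refine lt_of_le_of_ne le_sup_left ?_
      intro h
      apply hu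
      rw [h]
      exact Submodule.mem_sup_right (Submodule.mem_span_singleton_self u)
    have := Submodule.finrank_lt_finrank_of_lt hlt
    have h2 : Module.finrank ℝ ↥(V ⊔ Submodule.span ℝ {u}) ≤ d := by
      have := Submodule.finrank_le (V ⊔ Submodule.span ℝ {u})
      rwa [Module.finrank_fin_fun] at this
    omega
  -- case Q *ᵥ u = 0 : everything is zero
  by_cases hQu : Q.mulVec u = 0
  · have hker : ∀ z : Fin d → ℝ, Q.mulVec z = 0 := by
      intro z
      have hz : z ∈ V ⊔ Submodule.span ℝ {u} := htop ▸ Submodule.mem_top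
      rw [Submodule.mem_sup] at hz
      obtain ⟨v, hv, wz, hwz, rfl⟩ := hz
      obtain ⟨t, rfl⟩ := Submodule.mem_span_singleton.mp hwz
      rw [Matrix.mulVec_add, (hQV v hv).1, Matrix.mulVec_smul, hQu, smul_zero, add_zero]
    have hl0 : l = 0 := by
      have h1 := hQx ⟨0, hd⟩
      rw [hker] at h1
      funext i
      have := congrFun h1 i
      simp at this
      tauto
    have hc0 : c = 0 := by
      have := hlx ⟨0, hd⟩
      rw [hl0] at this
      simp at this
      linarith
    have hQ0 : Q = 0 := by
      ext i j
      have := congrFun (hker (Pi.single j 1)) i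
      simpa [Matrix.mulVec_single] using this
    exact hnontriv ⟨hQ0, hl0, hc0⟩
  -- otherwise u ⬝ᵥ Q *ᵥ u ≠ 0
  have huQu : u ⬝ᵥ Q.mulVec u ≠ 0 := by
    intro h
    apply hQu
    have hall : ∀ z : Fin d → ℝ, Q.mulVec u ⬝ᵥ z = 0 := by
      intro z
      have hz : z ∈ V ⊔ Submodule.span ℝ {u} := htop ▸ Submodule.mem_top
      rw [Submodule.mem_sup] at hz
      obtain ⟨v, hv, wz, hwz, rfl⟩ := hz
      obtain ⟨t, rfl⟩ := Submodule.mem_span_singleton.mp hwz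
      have h1 : Q.mulVec u ⬝ᵥ v = 0 := by
        rw [dotProduct_comm, hsym, (hQV v hv).1, dotProduct_zero]
      rw [dotProduct_add, h1, dotProduct_smul, dotProduct_comm, h, smul_zero,
        zero_add]
    funext i
    have := hall (Pi.single i 1)
    rw [dotProduct_single, mul_one] at this
    simpa using this
  -- the quadric is contained in the hyperplane spanned by the cone points
  have hsubH : S ⊆ (affineSpan ℝ (Set.range x) : Set (Fin d → ℝ)) := by
    intro y hy
    have hz : y - x ⟨0, hd⟩ ∈ V ⊔ Submodule.span ℝ {u} := htop ▸ Submodule.mem_top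
    rw [Submodule.mem_sup] at hz
    obtain ⟨v, hv, wz, hwz, hyv⟩ := hz
    obtain ⟨s, rfl⟩ := Submodule.mem_span_singleton.mp hwz
    have hyeq : y = x ⟨0, hd⟩ + v + s • u := by
      rw [eq_sub_iff_add_eq] at hyv
      rw [← hyv]; ring
    have hQv := (hQV v hv).1
    have hlv := (hQV v hv).2
    -- compute the value of the quadric at y
    have hval : y ⬝ᵥ Q.mulVec y + l ⬝ᵥ y + c = s ^ 2 * (u ⬝ᵥ Q.mulVec u) := by
      rw [hyeq]
      have e2 : v ⬝ᵥ Q.mulVec (x ⟨0, hd⟩) = 0 := by rw [hsym, hQv, dotProduct_zero]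
      have e4 : v ⬝ᵥ Q.mulVec u = 0 := by rw [hsym, hQv, dotProduct_zero]
      have e2' : x ⟨0, hd⟩ ⬝ᵥ Q.mulVec v = 0 := by rw [hQv, dotProduct_zero]
      have e4' : u ⬝ᵥ Q.mulVec v = 0 := by rw [hQv, dotProduct_zero]
      have e5 : x ⟨0, hd⟩ ⬝ᵥ Q.mulVec u = -(1/2) * (l ⬝ᵥ u) := by
        rw [hsym, hQx, dotProduct_smul, dotProduct_comm u l, smul_eq_mul]
        ring
      have e5' : u ⬝ᵥ Q.mulVec (x ⟨0, hd⟩) = -(1/2) * (l ⬝ᵥ u) := by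
        rw [hQx, dotProduct_smul, dotProduct_comm u l, smul_eq_mul]; ring
      have e1 : x ⟨0, hd⟩ ⬝ᵥ Q.mulVec (x ⟨0, hd⟩) = c := by
        rw [hQx, dotProduct_smul, dotProduct_comm (x ⟨0, hd⟩) l, hlx, smul_eq_mul]
        ring
      have e6 : v ⬝ᵥ Q.mulVec v = 0 := by rw [hQv, dotProduct_zero]
      have e7 : l ⬝ᵥ x ⟨0, hd⟩ = -2 * c := hlx _
      simp only [Matrix.mulVec_add, Matrix.mulVec_smul, add_dotProduct,
        dotProduct_add, smul_dotProduct, dotProduct_smul, smul_eq_mul,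
        e1, e2, e2', e4, e4', e5, e5', e6, e7, hlv]
      ring
    rw [hS] at hy
    rw [Set.mem_setOf_eq, hval] at hy
    have hs0 : s = 0 := by
      rcases mul_eq_zero.mp hy with h | h
      · exact pow_eq_zero_iff (by norm_num) |>.mp h
      · exact absurd h huQu
    rw [hs0, zero_smul, add_zero] at hyeq
    rw [hyeq]
    have hx0 : x ⟨0, hd⟩ ∈ affineSpan ℝ (Set.range x) :=
      mem_affineSpan ℝ (Set.mem_range_self _)
    have hvdir : v ∈ (affineSpan ℝ (Set.range x)).direction := by
      rw [direction_affineSpan]; exact hv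
    have := AffineSubspace.vadd_mem_of_mem_direction hvdir hx0
    simpa [add_comm] using this
  have : affineSpan ℝ S ≤ affineSpan ℝ (Set.range x) := affineSpan_le.mpr hsubH
  rw [hspan] at this
  have htop' : affineSpan ℝ (Set.range x) = ⊤ := le_antisymm le_top this
  apply hu
  have : (affineSpan ℝ (Set.range x)).direction = ⊤ := by
    rw [htop', AffineSubspace.direction_top]
  rw [direction_affineSpan] at this
  rw [hV, this]
  exact Submodule.mem_top
end

section
/- Suppose Ω is an n×n equilibrium stress matrix for a framework (G,p) in ℝ^d, i.e., Ω is symmetric, supported on edges of G, has the all-ones vector and all coordinate vectors of p in its kernel. Form the (n+1)×(n+1) matrix Ω' by adding a row and column of zeros. Then Ω' is an equilibrium stress matrix for the coned framework p₀*(G,p) in ℝ^{d+1} (with p placed in a hyperplane of ℝ^{d+1} and p₀ outside that hyperplane), and Ω' has the same rank and the same number of positive and negative eigenvalues as Ω. -/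
open Matrix Polynomial

/-- Padding an equilibrium stress matrix with a zero row and column for the cone vertex. -/
def padStress {n : ℕ} (Ω : Matrix (Fin n) (Fin n) ℝ) :
    Matrix (Fin (n + 1)) (Fin (n + 1)) ℝ :=
  fun i j =>
    Fin.lastCases (motive := fun _ => ℝ) 0
      (fun a => Fin.lastCases (motive := fun _ => ℝ) 0 (fun b => Ω a b) j) i

lemma padStress_castSucc_castSucc {n : ℕ} (Ω : Matrix (Fin n) (Fin n) ℝ) (a b : Fin n) :
    padStress Ω a.castSucc b.castSucc = Ω a b := by
  simp [padStress]

lemma padStress_last_left {n : ℕ} (Ω : Matrix (Fin n) (Fin n) ℝ) (j : Fin (n+1)) :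
    padStress Ω (Fin.last n) j = 0 := by
  simp [padStress]

lemma padStress_last_right {n : ℕ} (Ω : Matrix (Fin n) (Fin n) ℝ) (i : Fin (n+1)) :
    padStress Ω i (Fin.last n) = 0 := by
  induction i using Fin.lastCases <;> simp [padStress]

lemma padStress_eq {n : ℕ} (Ω : Matrix (Fin n) (Fin n) ℝ) :
    padStress Ω = (reindex finSumFinEquiv finSumFinEquiv)
      (fromBlocks Ω 0 0 (0 : Matrix (Fin 1) (Fin 1) ℝ)) := by
  ext i j
  have hlast : (Fin.last n) = Fin.natAdd n (0 : Fin 1) := by ext; simp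
  have hcs : ∀ a : Fin n, a.castSucc = Fin.castAdd 1 a := fun a => rfl
  induction i using Fin.lastCases with
  | last =>
    rw [padStress_last_left, hlast]
    simp only [reindex_apply, submatrix_apply, finSumFinEquiv_symm_apply_natAdd]
    rcases h : finSumFinEquiv.symm j with a | a <;> simp [fromBlocks]
  | cast a =>
    induction j using Fin.lastCases with
    | last =>
      rw [padStress_last_right, hlast, hcs]
      simp
    | cast b =>
      rw [padStress_castSucc_castSucc, hcs, hcs]
      simp

lemma padStress_mulVec {n : ℕ} (Ω : Matrix (Fin n) (Fin n) ℝ) (v : Fin (n+1) → ℝ)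
    (i : Fin n) :
    (padStress Ω).mulVec v i.castSucc = Ω.mulVec (fun b => v b.castSucc) i := by
  unfold Matrix.mulVec dotProduct
  rw [Fin.sum_univ_castSucc]
  simp [padStress_castSucc_castSucc, padStress_last_right]

lemma padStress_mulVec_last {n : ℕ} (Ω : Matrix (Fin n) (Fin n) ℝ) (v : Fin (n+1) → ℝ) :
    (padStress Ω).mulVec v (Fin.last n) = 0 := by
  unfold Matrix.mulVec dotProduct
  simp [padStress_last_left]

lemma charpoly_diag' {m : ℕ} (d : Fin m → ℝ) :
    (Matrix.diagonal d).charpoly = ∏ i, (X - C (d i)) := by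
  unfold Matrix.charpoly
  rw [charmatrix, RingHom.mapMatrix_apply, Matrix.diagonal_map (by simp), Matrix.scalar_apply,
    Matrix.diagonal_sub, Matrix.det_diagonal]

lemma charpoly_conj' {m : ℕ} (U : Matrix (Fin m) (Fin m) ℝ) (V : Matrix (Fin m) (Fin m) ℝ)
    (hUV : U * V = 1) (A : Matrix (Fin m) (Fin m) ℝ) :
    (U * A * V).charpoly = A.charpoly := by
  unfold Matrix.charpoly
  have key : charmatrix (U * A * V) =
      U.map C * charmatrix A * V.map C := by
    rw [charmatrix, charmatrix, RingHom.mapMatrix_apply, RingHom.mapMatrix_apply]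
    rw [Matrix.mul_sub, Matrix.sub_mul]
    congr 1
    · rw [Matrix.scalar_apply, ← Matrix.smul_one_eq_diagonal, mul_smul_comm, smul_mul_assoc,
        mul_one, ← Matrix.map_mul, hUV]
      simp
    · rw [← Matrix.map_mul, ← Matrix.map_mul]
  rw [key, Matrix.det_mul, Matrix.det_mul]
  have h1 : U.map (C : ℝ →+* ℝ[X]) * V.map C = 1 := by
    rw [← Matrix.map_mul, hUV]; simp
  have := Matrix.det_mul (U.map (C : ℝ →+* ℝ[X])) (V.map C)
  rw [h1, Matrix.det_one] at this
  rw [mul_comm (U.map _).det, mul_assoc, ← this]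
  ring

lemma charpoly_herm' {m : ℕ} {A : Matrix (Fin m) (Fin m) ℝ} (hA : A.IsHermitian) :
    A.charpoly = ∏ i, (X - C (hA.eigenvalues i)) := by
  have hs := hA.spectral_theorem
  set U : Matrix (Fin m) (Fin m) ℝ := (hA.eigenvectorUnitary : Matrix (Fin m) (Fin m) ℝ) with hU
  have h1 : U * star U = 1 := hA.eigenvectorUnitary.2.2
  have : (RCLike.ofReal ∘ hA.eigenvalues : Fin m → ℝ) = hA.eigenvalues := by
    ext i; simp
  have hc : A.charpoly = (U * diagonal (RCLike.ofReal ∘ hA.eigenvalues) * star U).charpoly :=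
    congrArg Matrix.charpoly hs
  rw [hc, this, charpoly_conj' U (star U) h1, charpoly_diag']

lemma roots_herm' {m : ℕ} {A : Matrix (Fin m) (Fin m) ℝ} (hA : A.IsHermitian) :
    A.charpoly.roots = Multiset.map hA.eigenvalues Finset.univ.val := by
  rw [charpoly_herm' hA, ← Polynomial.roots_multiset_prod_X_sub_C
    (Multiset.map hA.eigenvalues Finset.univ.val)]
  congr 1
  rw [Multiset.map_map, Finset.prod_eq_multiset_prod]
  rfl

lemma card_eq_countP' {m : ℕ} (f : Fin m → ℝ) (P : ℝ → Prop) [DecidablePred P] :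
    Fintype.card {i // P (f i)} = Multiset.countP P (Multiset.map f Finset.univ.val) := by
  rw [Multiset.countP_map, Fintype.card_subtype]
  rfl

/-- If `Ω` is an equilibrium stress matrix for a framework `(G, p)` in ℝ^d, then the
matrix `Ω'` obtained by adding a zero row and column is an equilibrium stress matrix for
the coned framework in ℝ^(d+1) (with `p` placed in the hyperplane `x_{d+1} = h` and the
cone point off that hyperplane), and `Ω'` has the same rank and the same numbers of
positive and negative eigenvalues as `Ω`. -/
theorem cone_stress_pad {d n : ℕ}
    (G : SimpleGraph (Fin n)) (p : Fin n → Fin d → ℝ)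
    (Ω : Matrix (Fin n) (Fin n) ℝ) (hΩ : Ω.IsHermitian)
    (hsupp : ∀ i j, i ≠ j → ¬ G.Adj i j → Ω i j = 0)
    (hones : Ω.mulVec 1 = 0)
    (hcoord : ∀ k : Fin d, Ω.mulVec (fun i => p i k) = 0)
    -- the coned framework:
    (G' : SimpleGraph (Fin (n + 1))) (p' : Fin (n + 1) → Fin (d + 1) → ℝ) (h : ℝ)
    (hG'old : ∀ a b : Fin n, (G'.Adj a.castSucc b.castSucc ↔ G.Adj a b))
    (hG'cone : ∀ a : Fin n, G'.Adj (Fin.last n) a.castSucc)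
    (hp'old : ∀ (a : Fin n) (k : Fin d), p' a.castSucc k.castSucc = p a k)
    (hp'flat : ∀ a : Fin n, p' a.castSucc (Fin.last d) = h)
    (hp'apex : p' (Fin.last n) (Fin.last d) ≠ h)
    (hΩ' : (padStress Ω).IsHermitian) :
    (padStress Ω).IsSymm ∧
    (∀ i j, i ≠ j → ¬ G'.Adj i j → padStress Ω i j = 0) ∧
    (padStress Ω).mulVec 1 = 0 ∧
    (∀ k : Fin (d + 1), (padStress Ω).mulVec (fun i => p' i k) = 0) ∧
    (padStress Ω).rank = Ω.rank ∧
    Fintype.card {i // 0 < hΩ'.eigenvalues i} = Fintype.card {i // 0 < hΩ.eigenvalues i} ∧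
    Fintype.card {i // hΩ'.eigenvalues i < 0} =
      Fintype.card {i // hΩ.eigenvalues i < 0} := by
  -- the eigenvalue multiset relation
  have hcp : (padStress Ω).charpoly = Ω.charpoly * X := by
    rw [padStress_eq, Matrix.charpoly_reindex, Matrix.charpoly_fromBlocks_zero₂₁]
    congr 1
    have h0 : (0 : Matrix (Fin 1) (Fin 1) ℝ) = diagonal (fun _ => (0:ℝ)) := by simp
    rw [h0, charpoly_diag']
    simp
  have hroots : Multiset.map hΩ'.eigenvalues Finset.univ.val
      = 0 ::ₘ Multiset.map hΩ.eigenvalues Finset.univ.val := by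
    have h1 := roots_herm' hΩ'
    rw [hcp, Polynomial.roots_mul (mul_ne_zero (Matrix.charpoly_monic Ω).ne_zero
      Polynomial.X_ne_zero), roots_herm' hΩ, Polynomial.roots_X] at h1
    rw [← h1]
    rw [add_comm, Multiset.singleton_add]
  refine ⟨?_, ?_, ?_, ?_, ?_, ?_, ?_⟩
  · ext i j
    rw [Matrix.transpose_apply]
    have := hΩ'.apply i j
    simpa using this
  · intro i j hij hadj
    induction i using Fin.lastCases with
    | last => exact padStress_last_left Ω j
    | cast a =>
      induction j using Fin.lastCases with
      | last => exact padStress_last_right Ω _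
      | cast b =>
        rw [padStress_castSucc_castSucc]
        refine hsupp a b (fun hab => hij (by rw [hab])) (fun hg => hadj ?_)
        exact (hG'old a b).mpr hg
  · funext i
    induction i using Fin.lastCases with
    | last => exact padStress_mulVec_last Ω 1
    | cast a =>
      rw [padStress_mulVec]
      have : (fun b : Fin n => (1 : Fin (n+1) → ℝ) b.castSucc) = (1 : Fin n → ℝ) := rfl
      rw [this, hones]
      rfl
  · intro k
    funext i
    induction i using Fin.lastCases with
    | last => exact padStress_mulVec_last Ω _
    | cast a =>
      rw [padStress_mulVec]
      induction k using Fin.lastCases with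
      | last =>
        have hv : (fun b : Fin n => p' b.castSucc (Fin.last d)) = h • (1 : Fin n → ℝ) := by
          funext b; simp [hp'flat b]
        rw [hv, Matrix.mulVec_smul, hones]
        simp
      | cast k' =>
        have hv : (fun b : Fin n => p' b.castSucc k'.castSucc) = fun b => p b k' := by
          funext b; exact hp'old b k'
        rw [hv, hcoord k']
        rfl
  · rw [hΩ'.rank_eq_card_non_zero_eigs, hΩ.rank_eq_card_non_zero_eigs,
      card_eq_countP' _ (· ≠ 0), card_eq_countP' _ (· ≠ 0), hroots,
      Multiset.countP_cons_of_neg _ (by simp)]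
  · rw [card_eq_countP' _ (0 < ·), card_eq_countP' _ (0 < ·), hroots,
      Multiset.countP_cons_of_neg _ (by simp)]
  · rw [card_eq_countP' _ (· < 0), card_eq_countP' _ (· < 0), hroots,
      Multiset.countP_cons_of_neg _ (by simp)]
end

section
/- Let {x₁,…,xₙ} be at least 3 distinct collinear points in ℝ^d. Then the complete graph framework on these points supports a positive semidefinite equilibrium stress matrix Ω of rank n - 2 (corank 2), i.e., a symmetric PSD matrix with Ω·𝟙 = 0 and ∑_j Ω_{ij}(x_i - x_j) = 0 for all i, whose kernel is exactly the 2-dimensional span of the all-ones vector and the parametrization vector of the points along the line. -/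
open Matrix

/-- At least three distinct collinear points `x i = a + t i • u` support a PSD
equilibrium stress matrix of rank `n - 2`, whose kernel is exactly the span of the
all-ones vector and the parametrization vector `t`. -/
theorem collinear_psd_stress {d n : ℕ} (hn : 3 ≤ n)
    (a u : Fin d → ℝ) (hu : u ≠ 0)
    (t : Fin n → ℝ) (ht : Function.Injective t)
    (x : Fin n → Fin d → ℝ) (hx : ∀ i, x i = a + t i • u) :
    ∃ Ω : Matrix (Fin n) (Fin n) ℝ,
      Ω.PosSemidef ∧
      Ω.mulVec 1 = 0 ∧
      (∀ k : Fin d, Ω.mulVec (fun i => x i k) = 0) ∧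
      (∀ w : Fin n → ℝ, Ω.mulVec w = 0 ↔
        w ∈ Submodule.span ℝ ({(1 : Fin n → ℝ), t} : Set (Fin n → ℝ))) ∧
      Ω.rank = n - 2 := by
  classical
  let one' : EuclideanSpace ℝ (Fin n) := WithLp.toLp 2 (1 : Fin n → ℝ)
  let t' : EuclideanSpace ℝ (Fin n) := WithLp.toLp 2 t
  let V : Submodule ℝ (EuclideanSpace ℝ (Fin n)) := Submodule.span ℝ {one', t'}
  let K := Vᗮ
  let P : EuclideanSpace ℝ (Fin n) →ₗ[ℝ] EuclideanSpace ℝ (Fin n) :=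
    K.subtype ∘ₗ (K.orthogonalProjectionOnto).toLinearMap
  let Ω : Matrix (Fin n) (Fin n) ℝ := LinearMap.toMatrix'
    ((WithLp.linearEquiv 2 ℝ (Fin n → ℝ)).toLinearMap ∘ₗ P ∘ₗ
      (WithLp.linearEquiv 2 ℝ (Fin n → ℝ)).symm.toLinearMap)
  have hmv : ∀ w : Fin n → ℝ, Ω.mulVec w = (P (WithLp.toLp 2 w)).ofLp := by
    intro w
    rw [← Matrix.toLin'_apply, Matrix.toLin'_toMatrix']
    rfl
  have hmv0 : ∀ w : Fin n → ℝ, Ω.mulVec w = 0 ↔ P (WithLp.toLp 2 w) = 0 := by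
    intro w
    rw [hmv, WithLp.ofLp_eq_zero]
  have hVmem : ∀ w : Fin n → ℝ,
      (w ∈ Submodule.span ℝ ({(1 : Fin n → ℝ), t} : Set (Fin n → ℝ))) ↔ WithLp.toLp 2 w ∈ V := by
    intro w
    have hV : V = (Submodule.span ℝ ({(1 : Fin n → ℝ), t} : Set (Fin n → ℝ))).map
        (WithLp.linearEquiv 2 ℝ (Fin n → ℝ)).symm.toLinearMap := by
      rw [Submodule.map_span, Set.image_pair]
      rfl
    rw [hV, Submodule.mem_map_equiv]
    rfl
  have hKer : ∀ w : EuclideanSpace ℝ (Fin n), P w = 0 ↔ w ∈ V := by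
    intro w
    constructor
    · intro h
      have h0 : (K.orthogonalProjectionOnto w : EuclideanSpace ℝ (Fin n)) = 0 := h
      have h1 : K.orthogonalProjectionOnto w = 0 := Subtype.ext h0
      have hw : w ∈ Kᗮ := Submodule.orthogonalProjectionOnto_eq_zero_iff.mp h1
      rwa [Submodule.orthogonal_orthogonal] at hw
    · intro h
      have hw : w ∈ Kᗮ := by rwa [Submodule.orthogonal_orthogonal]
      have h1 : K.orthogonalProjectionOnto w = 0 := Submodule.orthogonalProjectionOnto_eq_zero_iff.mpr hw
      show (K.orthogonalProjectionOnto w : EuclideanSpace ℝ (Fin n)) = 0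
      rw [h1]; rfl
  have hsa : ∀ v w : EuclideanSpace ℝ (Fin n),
      inner ℝ (P v) w = (inner ℝ v (P w) : ℝ) :=
    fun v w => Submodule.inner_starProjection_left_eq_right K v w
  have hPP : ∀ v : EuclideanSpace ℝ (Fin n), P (P v) = P v := by
    intro v
    show ((K.orthogonalProjectionOnto ((K.orthogonalProjectionOnto v : EuclideanSpace ℝ (Fin n)))) :
        EuclideanSpace ℝ (Fin n)) = _
    rw [Submodule.orthogonalProjectionOnto_mem_subspace_eq_self]
    rfl
  -- inner with single picks coordinates
  have hPs : ∀ (i : Fin n) (w : EuclideanSpace ℝ (Fin n)),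
      (inner ℝ (EuclideanSpace.single i (1:ℝ)) w : ℝ) = w i := by
    intro i w
    rw [EuclideanSpace.inner_single_left]
    simp
  have hentry : ∀ i j, Ω i j =
      (inner ℝ (EuclideanSpace.single i (1:ℝ)) (P (EuclideanSpace.single j 1)) : ℝ) := by
    intro i j
    rw [hPs]
    have hs : WithLp.toLp 2 (Pi.single j (1:ℝ)) = (EuclideanSpace.single j 1 : EuclideanSpace ℝ (Fin n)) := by
      ext j'
      simp [EuclideanSpace.single_apply, Pi.single_apply]
    show LinearMap.toMatrix' _ i j = _
    rw [LinearMap.toMatrix'_apply]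
    show P (WithLp.toLp 2 (Pi.single j (1:ℝ))) i = _
    rw [hs]
  have hherm : Ω.IsHermitian := by
    ext i j
    show star (Ω j i) = Ω i j
    rw [star_trivial, hentry, hentry, ← hsa, real_inner_comm]
  have hpsd : Ω.PosSemidef := by
    refine Matrix.PosSemidef.of_dotProduct_mulVec_nonneg hherm fun w => ?_
    have key : ∀ v : EuclideanSpace ℝ (Fin n), (0:ℝ) ≤ inner ℝ v (P v) := by
      intro v
      have h1 : (inner ℝ (P v) (P v) : ℝ) = inner ℝ v (P (P v)) := hsa v (P v)
      rw [hPP] at h1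
      rw [← h1]
      exact real_inner_self_nonneg
    have hdot : star w ⬝ᵥ Ω.mulVec w
        = (inner ℝ (WithLp.toLp 2 w) (P (WithLp.toLp 2 w)) : ℝ) := by
      rw [hmv, PiLp.inner_apply]
      simp [dotProduct, mul_comm]
    rw [hdot]
    exact key _
  have h1V : one' ∈ V := Submodule.subset_span (by left; rfl)
  have htV : t' ∈ V := Submodule.subset_span (by right; rfl)
  -- linear independence
  have i0 : Fin n := ⟨0, by omega⟩
  have i1 : Fin n := ⟨1, by omega⟩
  have hli : LinearIndependent ℝ (![one', t'] : Fin 2 → EuclideanSpace ℝ (Fin n)) := by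
    rw [LinearIndependent.pair_iff]
    intro s c hsc
    have hi : s * 1 + c * t (⟨0, by omega⟩ : Fin n) = 0 := by
        simpa [one', t'] using congrArg (fun v : EuclideanSpace ℝ (Fin n) => v ⟨0, by omega⟩) hsc
    have hj : s * 1 + c * t (⟨1, by omega⟩ : Fin n) = 0 := by
        simpa [one', t'] using congrArg (fun v : EuclideanSpace ℝ (Fin n) => v ⟨1, by omega⟩) hsc
    have hij : (⟨0, by omega⟩ : Fin n) ≠ ⟨1, by omega⟩ := by simp [Fin.ext_iff]
    have hc : c = 0 := by
      by_contra hc0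
      have h1 : c * t ⟨0, by omega⟩ = c * t ⟨1, by omega⟩ := by linarith
      exact hij (ht (mul_left_cancel₀ hc0 h1))
    refine ⟨by rw [hc] at hi; linarith, hc⟩
  have hfinV : Module.finrank ℝ V = 2 := by
    have hrange : Set.range (![one', t'] : Fin 2 → EuclideanSpace ℝ (Fin n)) = {one', t'} := by
      ext v
      constructor
      · rintro ⟨k, rfl⟩
        fin_cases k
        · left; rfl
        · right; rfl
      · rintro (rfl | rfl)
        · exact ⟨0, rfl⟩
        · exact ⟨1, rfl⟩
    have h2 := finrank_span_eq_card hli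
    rw [hrange] at h2
    simpa using h2
  refine ⟨Ω, hpsd, ?_, ?_, ?_, ?_⟩
  · rw [hmv0]; exact (hKer _).mpr h1V
  · intro k
    rw [hmv0]
    refine (hKer _).mpr ?_
    have hxk : WithLp.toLp 2 (fun i => x i k) = (a k • one' + u k • t' : EuclideanSpace ℝ (Fin n)) := by
      ext i
      show x i k = a k * 1 + u k * t i
      rw [hx i]
      simp [mul_comm]
    rw [hxk]
    exact V.add_mem (V.smul_mem _ h1V) (V.smul_mem _ htV)
  · intro w
    rw [hmv0, hKer, hVmem]
  · have hrank : Ω.rank = Module.finrank ℝ (LinearMap.range Ω.mulVecLin) := rfl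
    have hlin : Ω.mulVecLin = (WithLp.linearEquiv 2 ℝ (Fin n → ℝ)).toLinearMap ∘ₗ P ∘ₗ
        (WithLp.linearEquiv 2 ℝ (Fin n → ℝ)).symm.toLinearMap :=
      LinearMap.ext fun w => by rw [Matrix.mulVecLin_apply, hmv]; rfl
    rw [hrank, hlin, LinearMap.range_comp, LinearMap.range_comp, LinearEquiv.range,
      Submodule.map_top, LinearEquiv.finrank_map_eq]
    have hrangeP : LinearMap.range P = K := by
      rw [LinearMap.range_comp]
      have hsurj : LinearMap.range ((K.orthogonalProjectionOnto).toLinearMap) = ⊤ := by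
        rw [LinearMap.range_eq_top]
        intro k
        exact ⟨k, Submodule.orthogonalProjectionOnto_mem_subspace_eq_self k⟩
      rw [hsurj, Submodule.map_top, Submodule.range_subtype]
    rw [hrangeP]
    have hE : Module.finrank ℝ (EuclideanSpace ℝ (Fin n)) = n := by
      simp [finrank_euclideanSpace]
    have hsum := V.finrank_add_finrank_orthogonal
    rw [hE, hfinV] at hsum
    show Module.finrank ℝ ↥(Vᗮ) = n - 2
    omega
end
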